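/- In the complete graph K_n (n ≥ 2), for any spanning tree T and any edge e of T whose removal splits the vertices into sets of sizes m and n−m, the edge congestion equals m(n−m), and m(n−m) ≥ n−1 for all 1 ≤ m ≤ n−1. Consequently the radial (star) spanning tree minimizes the L^p congestion for every p, and C_p(K_n) = ((n−1)^{p+1})^{1/p}. -/

import Mathlib

open Classical

noncomputable section CongestionDefs

variable {V : Type*} [Fintype V] [DecidableEq V]

/-- Weighted congestion of an edge `e` of a spanning tree `T` of `G`: total weight of
edges of `G` whose endpoints are separated in `T` with `e` removed. -/
def edgeCongestion (G T : SimpleGraph V) (ω : Sym2 V → ℝ) (e : Sym2 V) : ℝ :=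
  ∑ f : Sym2 V,
    if f ∈ G.edgeSet ∧ ∃ a b : V, f = s(a, b) ∧ ¬ (T.deleteEdges {e}).Reachable a b
    then ω f else 0

/-- The `L^p` congestion of a spanning tree `T` (for a natural `p ≥ 1`). -/
def treeCong (G T : SimpleGraph V) (ω : Sym2 V → ℝ) (p : ℕ) : ℝ :=
  (∑ e : Sym2 V, if e ∈ T.edgeSet then (edgeCongestion G T ω e) ^ p else 0) ^ ((1 : ℝ) / p)

/-- The `L^∞` congestion of a spanning tree `T`. -/
def treeCongTop (G T : SimpleGraph V) (ω : Sym2 V → ℝ) : ℝ :=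
  ⨆ e ∈ T.edgeSet, edgeCongestion G T ω e

/-- `T` is a spanning tree of `G`. -/
def IsSpanningTree (G T : SimpleGraph V) : Prop := T ≤ G ∧ T.IsTree

/-- The `L^p` spanning tree congestion of `(G, ω)`. -/
def graphCong (G : SimpleGraph V) (ω : Sym2 V → ℝ) (p : ℕ) : ℝ :=
  sInf {x | ∃ T : SimpleGraph V, IsSpanningTree G T ∧ treeCong G T ω p = x}

/-- The `L^∞` spanning tree congestion of `(G, ω)`. -/
def graphCongTop (G : SimpleGraph V) (ω : Sym2 V → ℝ) : ℝ :=
  sInf {x | ∃ T : SimpleGraph V, IsSpanningTree G T ∧ treeCongTop G T ω = x}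

/-- Total weight of (the edges of) a graph. -/
def totalWeight (T : SimpleGraph V) (ρ : Sym2 V → ℝ) : ℝ :=
  ∑ e : Sym2 V, if e ∈ T.edgeSet then ρ e else 0

end CongestionDefs

/-- The star graph centered at `v`: `v` is joined to every other vertex. -/
def starGraph {V : Type*} (v : V) : SimpleGraph V where
  Adj a b := a ≠ b ∧ (a = v ∨ b = v)
  symm := by
    constructor
    intro a b h
    exact ⟨h.1.symm, h.2.symm⟩
  loopless := by
    constructor
    intro a h
    exact h.1 rfl

open SimpleGraph hiding starGraph
open Finset
set_option linter.unusedSectionVars false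

section Helpers
variable {V : Type*} [Fintype V] [DecidableEq V]

lemma reach_or_of_walk {T : SimpleGraph V} {a b u w : V}
    (p : T.Walk u w)
    (h : (T.deleteEdges {s(a,b)}).Reachable a u ∨ (T.deleteEdges {s(a,b)}).Reachable b u) :
    (T.deleteEdges {s(a,b)}).Reachable a w ∨ (T.deleteEdges {s(a,b)}).Reachable b w := by
  induction p with
  | nil => exact h
  | @cons u v w hadj q ih =>
    apply ih
    by_cases he : s(u, v) = s(a, b)
    · rw [Sym2.eq_iff] at he
      rcases he with ⟨_, rfl⟩ | ⟨_, rfl⟩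
      · exact Or.inr (Reachable.refl _)
      · exact Or.inl (Reachable.refl _)
    · have hadj' : (T.deleteEdges {s(a,b)}).Adj u v := by
        simp only [deleteEdges_adj, Set.mem_singleton_iff]
        exact ⟨hadj, he⟩
      rcases h with h | h
      · exact Or.inl (h.trans hadj'.reachable)
      · exact Or.inr (h.trans hadj'.reachable)

lemma reach_or {T : SimpleGraph V} (hc : T.Connected) (a b w : V) :
    (T.deleteEdges {s(a,b)}).Reachable a w ∨ (T.deleteEdges {s(a,b)}).Reachable b w := by
  obtain ⟨p⟩ := hc.preconnected a w
  exact reach_or_of_walk p (Or.inl (Reachable.refl a))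

lemma tree_not_reach {T : SimpleGraph V} (hT : T.IsTree) {a b : V} (hab : T.Adj a b) :
    ¬ (T.deleteEdges {s(a,b)}).Reachable a b := by
  have hb := (isAcyclic_iff_forall_adj_isBridge.mp hT.IsAcyclic) hab
  exact isBridge_iff.mp hb

lemma congestion_count
    {T : SimpleGraph V} (hT : T.IsTree) {a b : V} (hab : T.Adj a b) :
    edgeCongestion ⊤ T (fun _ => (1:ℝ)) s(a,b) =
      (({w | (T.deleteEdges {s(a,b)}).Reachable a w}.ncard : ℝ)) *
        ((Fintype.card V : ℝ) - ({w | (T.deleteEdges {s(a,b)}).Reachable a w}.ncard : ℝ)) := by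
  classical
  set D := T.deleteEdges {s(a,b)} with hD
  set S : Finset V := Finset.univ.filter (fun w => D.Reachable a w) with hS
  have hnr : ¬ D.Reachable a b := tree_not_reach hT hab
  have haS : a ∈ S := Finset.mem_filter.mpr ⟨Finset.mem_univ _, Reachable.refl a⟩
  have hbS : b ∉ S := by simp [hS, hnr]
  have hkey : ∀ w, w ∉ S → D.Reachable b w := by
    intro w hw
    rcases reach_or hT.isConnected a b w with h | h
    · exact absurd (by simp [hS]; exact h) hw
    · exact h
  have hsep : ∀ x y : V, ¬ D.Reachable x y ↔ ((x ∈ S ∧ y ∉ S) ∨ (x ∉ S ∧ y ∈ S)) := by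
    intro x y
    constructor
    · intro hne
      by_cases hx : x ∈ S <;> by_cases hy : y ∈ S
      · exact absurd (((by simpa [hS] using hx : D.Reachable a x).symm).trans
          (by simpa [hS] using hy)) hne
      · exact Or.inl ⟨hx, hy⟩
      · exact Or.inr ⟨hx, hy⟩
      · exact absurd (((hkey x hx).symm).trans (hkey y hy)) hne
    · rintro (⟨hx, hy⟩ | ⟨hx, hy⟩) hr
      · exact hy (by simp [hS] at hx ⊢; exact hx.trans hr)
      · exact hx (by simp [hS] at hy ⊢; exact hy.trans hr.symm)
  have hsum : edgeCongestion ⊤ T (fun _ => (1:ℝ)) s(a,b) =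
      ((Finset.univ.filter (fun f : Sym2 V =>
        f ∈ (⊤ : SimpleGraph V).edgeSet ∧
          ∃ x y : V, f = s(x,y) ∧ ¬ D.Reachable x y)).card : ℝ) := by
    rw [edgeCongestion, Finset.card_filter, Nat.cast_sum]
    refine Finset.sum_congr rfl fun f _ => ?_
    simp only [hD]
    split_ifs <;> simp
  rw [hsum]
  have hcard : (Finset.univ.filter (fun f : Sym2 V =>
        f ∈ (⊤ : SimpleGraph V).edgeSet ∧
          ∃ x y : V, f = s(x,y) ∧ ¬ D.Reachable x y)).card = S.card * Sᶜ.card := by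
    rw [← Finset.card_product]
    apply (Finset.card_bij (fun (p : V × V) _ => s(p.1, p.2)) ?_ ?_ ?_).symm
    · rintro ⟨x, y⟩ hp
      simp only [Finset.mem_product, Finset.mem_compl] at hp
      obtain ⟨hx, hy⟩ := hp
      have hxy : x ≠ y := fun h => hy (h ▸ hx)
      simp only [Finset.mem_filter, Finset.mem_univ, true_and]
      refine ⟨by simp [hxy], x, y, rfl, (hsep x y).mpr (Or.inl ⟨hx, hy⟩)⟩
    · rintro ⟨x, y⟩ hp ⟨x', y'⟩ hp' h
      simp only [Finset.mem_product, Finset.mem_compl] at hp hp'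
      rw [Sym2.eq_iff] at h
      rcases h with ⟨rfl, rfl⟩ | ⟨rfl, rfl⟩
      · rfl
      · exact absurd hp.1 hp'.2
    · intro f hf
      simp only [Finset.mem_filter, Finset.mem_univ, true_and] at hf
      obtain ⟨-, x, y, rfl, hr⟩ := hf
      rcases (hsep x y).mp hr with ⟨hx, hy⟩ | ⟨hx, hy⟩
      · exact ⟨(x, y), by simp [Finset.mem_product, hx, hy], rfl⟩
      · exact ⟨(y, x), by simp [Finset.mem_product, hx, hy], Sym2.eq_swap⟩
  rw [hcard]
  have hncard : {w | D.Reachable a w}.ncard = S.card := by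
    rw [hS, Set.ncard_eq_toFinset_card']
    congr 1
    ext w
    simp
  rw [Finset.card_compl]
  have hle : S.card ≤ Fintype.card V := Finset.card_le_univ S
  push_cast [hncard, Nat.cast_sub hle]
  ring

end Helpers

section StarLemmas
variable {V : Type*} [Fintype V] [DecidableEq V]

lemma not_reachable_of_isolated {G : SimpleGraph V} {a b : V} (hne : a ≠ b)
    (h : ∀ x, ¬ G.Adj a x) : ¬ G.Reachable a b := by
  rintro ⟨p⟩
  cases p with
  | nil => exact hne rfl
  | cons h' _ => exact h _ h'

lemma star_isolated {v w : V} (hw : w ≠ v) (x : V) :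
    ¬ ((starGraph v).deleteEdges {s(v,w)}).Adj w x := by
  intro h
  rw [deleteEdges_adj] at h
  obtain ⟨⟨hne, hvx⟩, hmem⟩ := h
  rcases hvx with rfl | rfl
  · exact hw rfl
  · exact hmem (by rw [Set.mem_singleton_iff, Sym2.eq_swap])

lemma starGraph_connected [Nonempty V] (v : V) : (starGraph v).Connected := by
  rw [connected_iff]
  have key : ∀ a, (starGraph v).Reachable a v := by
    intro a
    by_cases h : a = v
    · subst h; exact Reachable.refl a
    · exact (show (starGraph v).Adj a v from ⟨h, Or.inr rfl⟩).reachable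
  exact ⟨fun a b => (key a).trans (key b).symm, ‹_›⟩

lemma starGraph_isTree [Nonempty V] (v : V) : (starGraph v).IsTree := by
  refine ⟨starGraph_connected v, isAcyclic_iff_forall_adj_isBridge.mpr ?_⟩
  intro a b hab
  rw [isBridge_iff]
  obtain ⟨hne, hv⟩ := hab
  rcases hv with rfl | rfl
  · intro hr
    exact not_reachable_of_isolated (Ne.symm hne) (star_isolated (Ne.symm hne)) hr.symm
  · rw [show s(a, b) = s(b, a) from Sym2.eq_swap]
    exact not_reachable_of_isolated hne (star_isolated hne)

lemma star_class (v w : V) (hw : w ≠ v) :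
    {x | ((starGraph v).deleteEdges {s(v,w)}).Reachable w x} = {w} := by
  ext x
  simp only [Set.mem_setOf_eq, Set.mem_singleton_iff]
  constructor
  · intro hr
    by_contra hx
    exact not_reachable_of_isolated (fun h => hx h.symm) (star_isolated hw) hr
  · rintro rfl
    exact Reachable.refl _

lemma star_edge {v : V} {e : Sym2 V} (he : e ∈ (starGraph v).edgeSet) :
    ∃ w, w ≠ v ∧ e = s(v, w) := by
  induction e using Sym2.ind with
  | _ a b =>
    obtain ⟨hne, hv⟩ := (mem_edgeSet _).mp he
    rcases hv with rfl | rfl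
    · exact ⟨b, fun h => hne h.symm, rfl⟩
    · exact ⟨a, hne, Sym2.eq_swap⟩

lemma star_edge_congestion [Nonempty V] {v w : V} (hw : w ≠ v) :
    edgeCongestion ⊤ (starGraph v) (fun _ => (1:ℝ)) s(v,w) = (Fintype.card V : ℝ) - 1 := by
  have hadj : (starGraph v).Adj w v := ⟨hw, Or.inr rfl⟩
  have h := congestion_count (starGraph_isTree v) hadj
  rw [show s(w, v) = s(v, w) from Sym2.eq_swap, star_class v w hw] at h
  simpa using h

lemma congestion_lb {T : SimpleGraph V} (hT : T.IsTree) {e : Sym2 V} (he : e ∈ T.edgeSet) :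
    (Fintype.card V : ℝ) - 1 ≤ edgeCongestion ⊤ T (fun _ => (1:ℝ)) e := by
  induction e using Sym2.ind with
  | _ a b =>
    have hab : T.Adj a b := (mem_edgeSet _).mp he
    rw [congestion_count hT hab]
    set S := {w | (T.deleteEdges {s(a,b)}).Reachable a w} with hSdef
    have ha : a ∈ S := Reachable.refl a
    have hb : b ∉ S := tree_not_reach hT hab
    have h1 : 1 ≤ S.ncard := (Set.ncard_pos (Set.toFinite _)).mpr ⟨a, ha⟩
    have h2 : S.ncard + 1 ≤ Fintype.card V := by
      have hins : (insert b S).ncard ≤ Fintype.card V := by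
        rw [← Nat.card_eq_fintype_card, ← Set.ncard_univ]
        exact Set.ncard_le_ncard (Set.subset_univ _) (Set.toFinite _)
      rw [Set.ncard_insert_of_notMem hb (Set.toFinite _)] at hins
      omega
    have h1' : (1:ℝ) ≤ (S.ncard : ℝ) := by exact_mod_cast h1
    have h2' : (S.ncard : ℝ) + 1 ≤ (Fintype.card V : ℝ) := by exact_mod_cast h2
    nlinarith [mul_nonneg (by linarith : (0:ℝ) ≤ (S.ncard : ℝ) - 1)
      (by linarith : (0:ℝ) ≤ (Fintype.card V : ℝ) - (S.ncard : ℝ) - 1)]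

end StarLemmas

theorem completeGraph_congestion (n : ℕ) (hn : 2 ≤ n) :
    (∀ T : SimpleGraph (Fin n), IsSpanningTree ⊤ T → ∀ e ∈ T.edgeSet,
      ∀ a b : Fin n, e = s(a, b) →
        edgeCongestion ⊤ T (fun _ => (1 : ℝ)) e =
          (({w : Fin n | (T.deleteEdges {e}).Reachable a w}.ncard : ℝ)) *
            ((n : ℝ) - ({w : Fin n | (T.deleteEdges {e}).Reachable a w}.ncard : ℝ))) ∧
    (∀ m : ℕ, 1 ≤ m → m ≤ n - 1 → (n : ℝ) - 1 ≤ (m : ℝ) * ((n : ℝ) - (m : ℝ))) ∧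
    (∀ (v : Fin n) (p : ℕ), 1 ≤ p →
      IsSpanningTree (⊤ : SimpleGraph (Fin n)) (starGraph v) ∧
      (∀ T : SimpleGraph (Fin n), IsSpanningTree ⊤ T →
        treeCong ⊤ (starGraph v) (fun _ => (1 : ℝ)) p ≤ treeCong ⊤ T (fun _ => (1 : ℝ)) p) ∧
      graphCong (⊤ : SimpleGraph (Fin n)) (fun _ => (1 : ℝ)) p
        = (((n : ℝ) - 1) ^ (p + 1)) ^ ((1 : ℝ) / p)) := by
  classical
  have hne : Nonempty (Fin n) := ⟨⟨0, by omega⟩⟩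
  have hcard : Fintype.card (Fin n) = n := Fintype.card_fin n
  have hn1 : (1:ℝ) ≤ (n:ℝ) := by exact_mod_cast Nat.one_le_of_lt hn
  refine ⟨?_, ?_, ?_⟩
  · intro T hT e he a b hab
    subst hab
    have hadj : T.Adj a b := (SimpleGraph.mem_edgeSet _).mp he
    rw [congestion_count hT.2 hadj, hcard]
  · intro m h1 h2
    have h2' : m + 1 ≤ n := by omega
    have h1' : (1:ℝ) ≤ (m:ℝ) := by exact_mod_cast h1
    have h2'' : (m:ℝ) + 1 ≤ (n:ℝ) := by exact_mod_cast h2'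
    nlinarith [mul_nonneg (by linarith : (0:ℝ) ≤ (m:ℝ) - 1)
      (by linarith : (0:ℝ) ≤ (n:ℝ) - (m:ℝ) - 1)]
  · intro v p hp
    have hstarT : (starGraph v).IsTree := starGraph_isTree v
    have hstar : IsSpanningTree (⊤ : SimpleGraph (Fin n)) (starGraph v) := ⟨le_top, hstarT⟩
    -- number of edges of any spanning tree
    have hcardE : ∀ T : SimpleGraph (Fin n), T.IsTree → T.edgeFinset.card = n - 1 := by
      intro T hT
      have := hT.card_edgeFinset
      rw [hcard] at this
      omega
    have hfil : ∀ T : SimpleGraph (Fin n),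
        Finset.univ.filter (fun e => e ∈ T.edgeSet) = T.edgeFinset := by
      intro T
      ext e
      simp [SimpleGraph.mem_edgeFinset]
    -- value of the star sum
    have hconst : ((n - 1 : ℕ) : ℝ) = (n:ℝ) - 1 := by
      push_cast [Nat.cast_sub (by omega : 1 ≤ n)]
      ring
    have hstarsum : (∑ e : Sym2 (Fin n), if e ∈ (starGraph v).edgeSet then
        (edgeCongestion ⊤ (starGraph v) (fun _ => (1:ℝ)) e) ^ p else 0)
          = ((n:ℝ) - 1) ^ (p + 1) := by
      rw [← Finset.sum_filter, hfil]
      have : ∀ e ∈ (starGraph v).edgeFinset,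
          (edgeCongestion ⊤ (starGraph v) (fun _ => (1:ℝ)) e) ^ p = ((n:ℝ) - 1) ^ p := by
        intro e he
        obtain ⟨w, hw, rfl⟩ := star_edge (SimpleGraph.mem_edgeFinset.mp he)
        rw [star_edge_congestion hw, hcard]
      rw [Finset.sum_congr rfl this, Finset.sum_const, hcardE _ hstarT, nsmul_eq_mul, hconst,
        pow_succ]
      ring
    have hTCstar : treeCong ⊤ (starGraph v) (fun _ => (1:ℝ)) p
        = (((n:ℝ) - 1) ^ (p + 1)) ^ ((1:ℝ)/p) := by
      rw [treeCong, hstarsum]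
    have hbase : (0:ℝ) ≤ ((n:ℝ) - 1) ^ (p + 1) := pow_nonneg (by linarith) _
    -- lower bound for any spanning tree
    have hmin : ∀ T : SimpleGraph (Fin n), IsSpanningTree ⊤ T →
        treeCong ⊤ (starGraph v) (fun _ => (1:ℝ)) p ≤ treeCong ⊤ T (fun _ => (1:ℝ)) p := by
      intro T hT
      rw [hTCstar, treeCong]
      apply Real.rpow_le_rpow hbase ?_ (by positivity)
      rw [← Finset.sum_filter, hfil]
      calc ((n:ℝ) - 1) ^ (p + 1) = T.edgeFinset.card • ((n:ℝ) - 1) ^ p := by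
            rw [hcardE _ hT.2, nsmul_eq_mul, hconst, pow_succ]; ring
        _ ≤ ∑ e ∈ T.edgeFinset, (edgeCongestion ⊤ T (fun _ => (1:ℝ)) e) ^ p := by
            apply Finset.card_nsmul_le_sum
            intro e he
            have hlb := congestion_lb hT.2 (SimpleGraph.mem_edgeFinset.mp he)
            rw [hcard] at hlb
            exact pow_le_pow_left₀ (by linarith) hlb p
    refine ⟨hstar, hmin, ?_⟩
    rw [graphCong]
    have hmem : (((n:ℝ) - 1) ^ (p + 1)) ^ ((1:ℝ)/p) ∈
        {x | ∃ T : SimpleGraph (Fin n), IsSpanningTree ⊤ T ∧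
          treeCong ⊤ T (fun _ => (1:ℝ)) p = x} := ⟨starGraph v, hstar, hTCstar⟩
    have hlb : ∀ x ∈ {x | ∃ T : SimpleGraph (Fin n), IsSpanningTree ⊤ T ∧
        treeCong ⊤ T (fun _ => (1:ℝ)) p = x}, (((n:ℝ) - 1) ^ (p + 1)) ^ ((1:ℝ)/p) ≤ x := by
      rintro x ⟨T, hT, rfl⟩
      rw [← hTCstar]
      exact hmin T hT
    exact le_antisymm (csInf_le ⟨_, hlb⟩ hmem) (le_csInf ⟨_, hmem⟩ hlb)
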